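/- The thread decomposition of a diagram partitions its set of cells: every cell belongs to exactly one thread, and the algorithm terminates. -/

import Mathlib

/-- A cell `(c, r)` records a column `c ≥ 1` and a row `r ≥ 1`. -/
abbrev Cell : Type := ℕ × ℕ

/-- A diagram is a finite set of cells. -/
abbrev Diagram : Type := Finset Cell
/-- `ThreadSpec D ts`: the list `ts` of threads is a run of the greedy
threading algorithm on the diagram `D`. Thread `i` is constructed from the set
`U` of cells not threaded by the earlier threads: it starts at the
rightmost-then-lowest cell of `U`; after a cell `x`, the next cell is the
lowest cell of `U` (not already on this thread) in the column immediately left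
of `x` lying weakly above `x`; and the thread stops in column `1` or when no
such cell exists.  All cells get threaded. -/
def ThreadSpec (D : Diagram) (ts : List (List Cell)) : Prop :=
  ((ts.flatten).toFinset = D) ∧
  ∀ i (hi : i < ts.length),
    (ts.get ⟨i, hi⟩ ≠ []) ∧
    (∀ h0 : 0 < (ts.get ⟨i, hi⟩).length,
      ((ts.get ⟨i, hi⟩).get ⟨0, h0⟩ ∈ D \ (((ts.take i).flatten).toFinset) ∧
      ∀ p ∈ D \ (((ts.take i).flatten).toFinset),
        p.1 ≤ ((ts.get ⟨i, hi⟩).get ⟨0, h0⟩).1 ∧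
        (p.1 = ((ts.get ⟨i, hi⟩).get ⟨0, h0⟩).1 →
          ((ts.get ⟨i, hi⟩).get ⟨0, h0⟩).2 ≤ p.2))) ∧
    (∀ j (hj : j + 1 < (ts.get ⟨i, hi⟩).length),
      ((ts.get ⟨i, hi⟩).get ⟨j+1, hj⟩ ∈ D \ (((ts.take i).flatten).toFinset) ∧
       (ts.get ⟨i, hi⟩).get ⟨j+1, hj⟩ ∉ (ts.get ⟨i, hi⟩).take (j+1) ∧
       ((ts.get ⟨i, hi⟩).get ⟨j+1, hj⟩).1 + 1 =
          ((ts.get ⟨i, hi⟩).get ⟨j, Nat.lt_of_succ_lt hj⟩).1 ∧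
       ((ts.get ⟨i, hi⟩).get ⟨j, Nat.lt_of_succ_lt hj⟩).2 ≤
          ((ts.get ⟨i, hi⟩).get ⟨j+1, hj⟩).2 ∧
       (∀ p ∈ D \ (((ts.take i).flatten).toFinset),
         p ∉ (ts.get ⟨i, hi⟩).take (j+1) →
         p.1 + 1 = ((ts.get ⟨i, hi⟩).get ⟨j, Nat.lt_of_succ_lt hj⟩).1 →
         ((ts.get ⟨i, hi⟩).get ⟨j, Nat.lt_of_succ_lt hj⟩).2 ≤ p.2 →
         ((ts.get ⟨i, hi⟩).get ⟨j+1, hj⟩).2 ≤ p.2))) ∧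
    (∀ hne : ts.get ⟨i, hi⟩ ≠ [],
      ((ts.get ⟨i, hi⟩).getLast hne).1 = 1 ∨
      ¬ ∃ p ∈ D \ (((ts.take i).flatten).toFinset), p ∉ ts.get ⟨i, hi⟩ ∧
          p.1 + 1 = ((ts.get ⟨i, hi⟩).getLast hne).1 ∧
          ((ts.get ⟨i, hi⟩).getLast hne).2 ≤ p.2)

/-- candidates for the next cell after `x` among unthreaded cells `U`. -/
def cand (U : Finset Cell) (x : Cell) : Finset Cell :=
  U.filter (fun p => p.1 + 1 = x.1 ∧ x.2 ≤ p.2)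

lemma mem_cand {U : Finset Cell} {x p : Cell} :
    p ∈ cand U x ↔ p ∈ U ∧ p.1 + 1 = x.1 ∧ x.2 ≤ p.2 := by
  simp [cand]

noncomputable def nextCell (U : Finset Cell) (x : Cell) : Option Cell :=
  if h : (cand U x).Nonempty then
    some (x.1 - 1, ((cand U x).image Prod.snd).min' (h.image _))
  else none

lemma nextCell_none {U : Finset Cell} {x : Cell} (h : nextCell U x = none) :
    cand U x = ∅ := by
  unfold nextCell at h
  split at h
  · exact absurd h (by simp)
  · exact Finset.not_nonempty_iff_eq_empty.mp (by assumption)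

lemma nextCell_some {U : Finset Cell} {x y : Cell} (h : nextCell U x = some y) :
    y ∈ cand U x ∧ ∀ p ∈ cand U x, y.2 ≤ p.2 := by
  unfold nextCell at h
  split at h
  case isFalse => exact absurd h (by simp)
  case isTrue hn =>
    have hy : y = (x.1 - 1, ((cand U x).image Prod.snd).min' (hn.image _)) := by
      exact (Option.some_inj.mp h).symm
    obtain ⟨p, hp, hp2⟩ := Finset.mem_image.mp
      (((cand U x).image Prod.snd).min'_mem (hn.image _))
    have hcol : p.1 = x.1 - 1 := by
      have := (mem_cand.mp hp).2.1; omega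
    have hyp : y = p := by
      rw [hy, ← hp2, ← hcol]
    constructor
    · rw [hyp]; exact hp
    · intro q hq
      rw [hy]
      exact Finset.min'_le _ _ (Finset.mem_image_of_mem _ hq)

noncomputable def buildFrom : ℕ → Finset Cell → Cell → List Cell
  | 0, _, x => [x]
  | n+1, U, x =>
    x :: (match nextCell U x with
          | none => []
          | some y => buildFrom n U y)

lemma buildFrom_cons (n : ℕ) (U : Finset Cell) (x : Cell) :
    ∃ l, buildFrom n U x = x :: l := by
  cases n with
  | zero => exact ⟨[], rfl⟩
  | succ n => exact ⟨_, rfl⟩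

lemma buildFrom_ne_nil (n : ℕ) (U : Finset Cell) (x : Cell) :
    buildFrom n U x ≠ [] := by
  obtain ⟨l, hl⟩ := buildFrom_cons n U x; simp [hl]

lemma buildFrom_head (n : ℕ) (U : Finset Cell) (x : Cell)
    (h : 0 < (buildFrom n U x).length) : (buildFrom n U x)[0] = x := by
  obtain ⟨l, hl⟩ := buildFrom_cons n U x; simp [hl]

lemma self_mem_buildFrom (n : ℕ) (U : Finset Cell) (x : Cell) :
    x ∈ buildFrom n U x := by
  obtain ⟨l, hl⟩ := buildFrom_cons n U x; simp [hl]

/-- the invariants of a greedily built thread over unthreaded cells `U`. -/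
def Good (U : Finset Cell) (t : List Cell) : Prop :=
  t ≠ [] ∧
  (∀ k (hk : k < t.length), t[k] ∈ U) ∧
  (∀ j (hj : j + 1 < t.length),
     t[j+1].1 + 1 = t[j].1 ∧ t[j].2 ≤ t[j+1].2 ∧
     ∀ p ∈ U, p.1 + 1 = t[j].1 → t[j].2 ≤ p.2 → t[j+1].2 ≤ p.2) ∧
  (∀ hne : t ≠ [], cand U (t.getLast hne) = ∅)

lemma good_singleton {U : Finset Cell} {x : Cell} (hx : x ∈ U)
    (hc : cand U x = ∅) : Good U [x] := by
  refine ⟨by simp, ?_, ?_, ?_⟩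
  · intro k hk
    match k with
    | 0 => simpa
  · intro j hj; simp at hj
  · intro _; simpa

lemma good_buildFrom : ∀ (n : ℕ) (U : Finset Cell) (x : Cell), x ∈ U → x.1 ≤ n →
    Good U (buildFrom n U x) := by
  intro n
  induction n with
  | zero =>
    intro U x hx hxn
    refine good_singleton hx ?_
    rw [Finset.eq_empty_iff_forall_notMem]
    intro p hp
    have := (mem_cand.mp hp).2.1
    omega
  | succ n ih =>
    intro U x hx hxn
    rcases h : nextCell U x with _ | y
    · have hb : buildFrom (n+1) U x = [x] := by simp [buildFrom, h]
      rw [hb]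
      exact good_singleton hx (nextCell_none h)
    · have hb : buildFrom (n+1) U x = x :: buildFrom n U y := by simp [buildFrom, h]
      obtain ⟨hyc, hymin⟩ := nextCell_some h
      obtain ⟨hyU, hycol, hyrow⟩ := mem_cand.mp hyc
      have hg : Good U (buildFrom n U y) := ih U y hyU (by omega)
      set t' := buildFrom n U y with ht'
      obtain ⟨hne', hmem', hstep', hlast'⟩ := hg
      have ht'0 : ∀ h : 0 < t'.length, t'[0] = y := fun h => buildFrom_head n U y h
      rw [hb]
      have hlen' : 0 < t'.length := List.length_pos_iff.mpr hne'
      refine ⟨by simp, ?_, ?_, ?_⟩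
      · intro k hk
        match k with
        | 0 => simpa using hx
        | k+1 =>
          simp only [List.getElem_cons_succ]
          exact hmem' k (by simpa using hk)
      · intro j hj
        match j with
        | 0 =>
          simp only [List.getElem_cons_succ, List.getElem_cons_zero, ht'0 hlen']
          refine ⟨hycol, hyrow, ?_⟩
          intro p hp hpc hpr
          exact hymin p (mem_cand.mpr ⟨hp, hpc, hpr⟩)
        | j+1 =>
          simp only [List.getElem_cons_succ]
          exact hstep' j (by simpa using hj)
      · intro hne
        rw [List.getLast_cons hne']
        exact hlast' hne'

lemma good_col {U : Finset Cell} {t : List Cell} (hg : Good U t) :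
    ∀ k (hk : k < t.length), t[k].1 + k = (t[0]'(by
      have := hg.1; exact List.length_pos_iff.mpr this)).1 := by
  intro k
  induction k with
  | zero => intro hk; simp
  | succ k ih =>
    intro hk
    have h1 := (hg.2.2.1 k hk).1
    have h2 := ih (by omega)
    omega

lemma good_nodup {U : Finset Cell} {t : List Cell} (hg : Good U t) : t.Nodup := by
  rw [List.nodup_iff_injective_get]
  rintro ⟨i, hi⟩ ⟨j, hj⟩ hij
  simp only [List.get_eq_getElem] at hij
  have h1 := good_col hg i hi
  have h2 := good_col hg j hj
  rw [hij] at h1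
  simp only [Fin.mk.injEq]
  omega

lemma good_not_mem_take {U : Finset Cell} {t : List Cell} (hg : Good U t)
    (j : ℕ) (hj : j + 1 < t.length) : t[j+1] ∉ t.take (j+1) := by
  intro hmem
  obtain ⟨k, hk, hke⟩ := List.mem_iff_getElem.mp hmem
  have hkl : k < j + 1 := by simp at hk; omega
  have hke' : t[k]'(by omega) = t[j+1] := by
    rw [← hke, List.getElem_take]
  have h1 := good_col hg k (by omega)
  have h2 := good_col hg (j+1) hj
  rw [hke'] at h1
  omega

lemma good_subset {U : Finset Cell} {t : List Cell} (hg : Good U t) :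
    ∀ p ∈ t, p ∈ U := by
  intro p hp
  obtain ⟨k, hk, hke⟩ := List.mem_iff_getElem.mp hp
  rw [← hke]; exact hg.2.1 k hk

noncomputable def startCell (U : Finset Cell) (h : U.Nonempty) : Cell :=
  ((U.image Prod.fst).max' (h.image _),
   ((U.filter (fun p => p.1 = (U.image Prod.fst).max' (h.image _))).image Prod.snd).min'
     (by
      obtain ⟨p, hp, hpc⟩ := Finset.mem_image.mp ((U.image Prod.fst).max'_mem (h.image _))
      exact ⟨p.2, Finset.mem_image.mpr ⟨p, Finset.mem_filter.mpr ⟨hp, hpc⟩, rfl⟩⟩))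

lemma startCell_mem (U : Finset Cell) (h : U.Nonempty) : startCell U h ∈ U := by
  unfold startCell
  obtain ⟨r, hr⟩ := Finset.mem_image.mp (Finset.min'_mem
    ((U.filter (fun p => p.1 = (U.image Prod.fst).max' (h.image _))).image Prod.snd) (by
      obtain ⟨p, hp, hpc⟩ := Finset.mem_image.mp ((U.image Prod.fst).max'_mem (h.image _))
      exact ⟨p.2, Finset.mem_image.mpr ⟨p, Finset.mem_filter.mpr ⟨hp, hpc⟩, rfl⟩⟩))
  obtain ⟨hrf, hrv⟩ := hr
  obtain ⟨hrU, hrc⟩ := Finset.mem_filter.mp hrf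
  obtain ⟨a, b⟩ := r
  have ha : a = (U.image Prod.fst).max' (h.image _) := hrc
  subst ha
  have hb : b = _ := hrv
  rw [← hb]
  exact hrU

lemma startCell_max (U : Finset Cell) (h : U.Nonempty) :
    ∀ p ∈ U, p.1 ≤ (startCell U h).1 ∧ (p.1 = (startCell U h).1 → (startCell U h).2 ≤ p.2) := by
  intro p hp
  constructor
  · exact Finset.le_max' _ _ (Finset.mem_image_of_mem _ hp)
  · intro hpc
    exact Finset.min'_le _ _ (Finset.mem_image_of_mem _ (Finset.mem_filter.mpr ⟨hp, hpc⟩))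

noncomputable def threads (U : Finset Cell) : List (List Cell) :=
  if h : U.Nonempty then
    buildFrom (startCell U h).1 U (startCell U h) ::
      threads (U \ (buildFrom (startCell U h).1 U (startCell U h)).toFinset)
  else []
termination_by U.card
decreasing_by
  apply Finset.card_lt_card
  refine Finset.ssubset_iff_of_subset (Finset.sdiff_subset) |>.mpr ?_
  exact ⟨startCell U h, startCell_mem U h, by
    simp [List.mem_toFinset, self_mem_buildFrom]⟩



/-- The greedy threading algorithm terminates and partitions the cells of any
diagram: there is a (finite) list of threads satisfying the greedy
specification, in which every cell of the diagram appears exactly once. -/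
theorem threads_spec (U : Finset Cell) :
    ThreadSpec U (threads U) ∧ (threads U).flatten.Nodup := by
  induction U using Finset.strongInduction with
  | _ U ih =>
  by_cases h : U.Nonempty
  · rw [threads, dif_pos h]
    set x := startCell U h with hxdef
    set t := buildFrom x.1 U x with htdef
    have hgood : Good U t := good_buildFrom x.1 U x (startCell_mem U h) le_rfl
    set U' := U \ t.toFinset with hU'def
    have hsub : U' ⊂ U := by
      refine Finset.ssubset_iff_of_subset (Finset.sdiff_subset) |>.mpr ?_
      exact ⟨x, startCell_mem U h, by simp [htdef, self_mem_buildFrom]⟩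
    obtain ⟨⟨hflat', hspec'⟩, hnodup'⟩ := ih U' hsub
    set ts' := threads U' with hts'def
    have htsubU : t.toFinset ⊆ U := by
      intro p hp; exact good_subset hgood p (List.mem_toFinset.mp hp)
    constructor
    · constructor
      · -- flatten toFinset
        simp only [List.flatten_cons, List.toFinset_append, hflat']
        rw [Finset.union_sdiff_of_subset htsubU]
      · intro i hi
        match i with
        | 0 =>
          simp only [List.get_eq_getElem, List.getElem_cons_zero, List.take_zero,
            List.flatten_nil, List.toFinset_nil, Finset.sdiff_empty]
          refine ⟨hgood.1, ?_, ?_, ?_⟩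
          · intro h0
            rw [buildFrom_head x.1 U x h0]
            exact ⟨startCell_mem U h, fun p hp => startCell_max U h p hp⟩
          · intro j hj
            obtain ⟨hc, hr, hmin⟩ := hgood.2.2.1 j hj
            exact ⟨hgood.2.1 (j+1) hj, good_not_mem_take hgood j hj, hc, hr,
              fun p hp _ => hmin p hp⟩
          · intro hne
            right
            rintro ⟨p, hp, hpt, hpc, hpr⟩
            have := hgood.2.2.2 hne
            have hpm : p ∈ cand U (t.getLast hne) := mem_cand.mpr ⟨hp, hpc, hpr⟩
            rw [this] at hpm
            simp at hpm
        | i'+1 =>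
          have hi' : i' < ts'.length := by simpa using hi
          have H := hspec' i' hi'
          have hset : ∀ S : Finset Cell, U \ (t.toFinset ∪ S) = U' \ S := by
            intro S; ext p
            simp only [Finset.mem_sdiff, Finset.mem_union, hU'def]
            tauto
          simp only [List.get_eq_getElem, List.getElem_cons_succ, List.take_succ_cons,
            List.flatten_cons, List.toFinset_append, hset]
          simp only [List.get_eq_getElem] at H
          exact H
    · -- Nodup
      simp only [List.flatten_cons]
      rw [List.nodup_append]
      refine ⟨good_nodup hgood, hnodup', ?_⟩
      intro p hpt q hpf hpq
      subst hpq
      have hpU' : p ∈ U' := by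
        rw [← hflat']; exact List.mem_toFinset.mpr hpf
      rw [hU'def, Finset.mem_sdiff] at hpU'
      exact hpU'.2 (List.mem_toFinset.mpr hpt)
  · have hU : U = ∅ := Finset.not_nonempty_iff_eq_empty.mp h
    rw [threads, dif_neg h]
    subst hU
    refine ⟨⟨by simp, ?_⟩, by simp⟩
    intro i hi
    simp at hi


theorem thread_decomposition_partition (D : Diagram) :
    ∃ ts : List (List Cell), ThreadSpec D ts ∧
      (ts.flatten).Nodup ∧ ∀ p ∈ D, p ∈ ts.flatten := by
  obtain ⟨hspec, hnodup⟩ := threads_spec D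
  refine ⟨threads D, hspec, hnodup, ?_⟩
  intro p hp
  rw [← List.mem_toFinset, hspec.1]
  exact hp
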